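/- Let k : [0, ∞) → ℝ be continuous, non-increasing, with k(s) ≤ 0 for all s, let F be the solution of F'' + kF = 0 with F(0) = 0, F'(0) = 1, and set G(s) = ∫₀ˢ F(t) dt. Then the function s ↦ G(s)/(s·F(s)) is non-increasing on (0, ∞). -/

import Mathlib

open Set Real Filter Topology intervalIntegral
open MeasureTheory

private lemma mono_aux {f f' : ℝ → ℝ} {D : Set ℝ} (hD : Convex ℝ D) (hDsub : D ⊆ Set.Ici 0)
    (hf : ∀ s ∈ D, HasDerivWithinAt f (f' s) (Set.Ici 0) s)
    (h0 : ∀ s ∈ D, 0 ≤ f' s) : MonotoneOn f D := by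
  apply monotoneOn_of_hasDerivWithinAt_nonneg hD (f' := f')
  · exact fun x hx => ((hf x hx).continuousWithinAt).mono hDsub
  · intro x hx
    have hn : Set.Ici (0:ℝ) ∈ 𝓝 x :=
      Filter.mem_of_superset (mem_interior_iff_mem_nhds.mp hx) hDsub
    exact (((hf x (interior_subset hx)).hasDerivAt hn).hasDerivWithinAt)
  · exact fun x hx => h0 x (interior_subset hx)

private lemma aux2 {k F F' F'' : ℝ → ℝ} {D : Set ℝ} (hD : Convex ℝ D) (h0D : (0:ℝ) ∈ D)
    (hDsub : D ⊆ Set.Ici 0)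
    (hk_nonpos : ∀ s ∈ Set.Ici (0 : ℝ), k s ≤ 0)
    (hF' : ∀ s ∈ Set.Ici (0 : ℝ), HasDerivWithinAt F (F' s) (Set.Ici 0) s)
    (hF'' : ∀ s ∈ Set.Ici (0 : ℝ), HasDerivWithinAt F' (F'' s) (Set.Ici 0) s)
    (hODE : ∀ s ∈ Set.Ici (0 : ℝ), F'' s + k s * F s = 0)
    (hF0 : F 0 = 0) (hF'0 : F' 0 = 1)
    (hFnn : ∀ x ∈ D, 0 ≤ F x) : ∀ x ∈ D, 1 ≤ F' x ∧ x ≤ F x := by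
  have hF'mono : MonotoneOn F' D := by
    refine mono_aux hD hDsub (fun s hs => hF'' s (hDsub hs)) (fun s hs => ?_)
    have h1 := hODE s (hDsub hs)
    nlinarith [hk_nonpos s (hDsub hs), hFnn s hs]
  have h1 : ∀ x ∈ D, 1 ≤ F' x := by
    intro x hx
    have := hF'mono h0D hx (hDsub hx)
    rwa [hF'0] at this
  intro x hx
  refine ⟨h1 x hx, ?_⟩
  have hmono : MonotoneOn (fun s => F s - s) D := by
    refine mono_aux hD hDsub
      (fun s hs => (hF' s (hDsub hs)).sub (hasDerivWithinAt_id s _)) (fun s hs => ?_)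
    have := h1 s hs; linarith
  have := hmono h0D hx (hDsub hx)
  simp only [hF0] at this
  linarith

private lemma F_nonneg {k F F' F'' : ℝ → ℝ}
    (hk_nonpos : ∀ s ∈ Set.Ici (0 : ℝ), k s ≤ 0)
    (hF' : ∀ s ∈ Set.Ici (0 : ℝ), HasDerivWithinAt F (F' s) (Set.Ici 0) s)
    (hF'' : ∀ s ∈ Set.Ici (0 : ℝ), HasDerivWithinAt F' (F'' s) (Set.Ici 0) s)
    (hODE : ∀ s ∈ Set.Ici (0 : ℝ), F'' s + k s * F s = 0)
    (hF0 : F 0 = 0) (hF'0 : F' 0 = 1) : ∀ s ∈ Set.Ici (0:ℝ), 0 ≤ F s := by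
  have hFc : ContinuousOn F (Set.Ici 0) := fun s hs => (hF' s hs).continuousWithinAt
  have hF'c : ContinuousOn F' (Set.Ici 0) := fun s hs => (hF'' s hs).continuousWithinAt
  by_contra hcon
  push_neg at hcon
  obtain ⟨y, hy, hFy⟩ := hcon
  set S : Set ℝ := {s : ℝ | 0 ≤ s ∧ F s < 0} with hS
  have hne : S.Nonempty := ⟨y, hy, hFy⟩
  have hbdd : BddBelow S := ⟨0, fun x hx => hx.1⟩
  set t := sInf S with htdef
  have hSsub : S ⊆ Set.Ici 0 := fun x hx => hx.1
  have ht0 : 0 ≤ t := le_csInf hne (fun x hx => hx.1)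
  -- F t ≤ 0
  have htcl : t ∈ closure S := csInf_mem_closure hne hbdd
  have hnb : (𝓝[S] t).NeBot := mem_closure_iff_nhdsWithin_neBot.mp htcl
  have hFt_le : F t ≤ 0 := by
    have ht : Tendsto F (𝓝[S] t) (𝓝 (F t)) :=
      (hFc.continuousWithinAt ht0).mono_left (nhdsWithin_mono t hSsub)
    exact le_of_tendsto ht (eventually_nhdsWithin_of_forall fun x hx => le_of_lt hx.2)
  -- positivity of F' near 0 gives t > 0
  have htpos : 0 < t := by
    have h1 : ContinuousWithinAt F' (Set.Ici 0) 0 := hF'c.continuousWithinAt Set.self_mem_Ici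
    have h2 : {u : ℝ | 0 < F' u} ∈ 𝓝[Set.Ici 0] (0:ℝ) := by
      apply h1
      rw [hF'0]
      exact Ioi_mem_nhds one_pos
    rw [Metric.mem_nhdsWithin_iff] at h2
    obtain ⟨ε, hε, hball⟩ := h2
    have hsub : Set.Icc (0:ℝ) (ε/2) ⊆ {u : ℝ | 0 < F' u} := by
      intro u hu
      apply hball
      refine ⟨?_, hu.1⟩
      rw [Metric.mem_ball, Real.dist_eq, sub_zero, abs_of_nonneg hu.1]
      linarith [hu.2]
    have hmono : MonotoneOn F (Set.Icc 0 (ε/2)) := by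
      refine mono_aux (convex_Icc _ _) (Set.Icc_subset_Ici_self)
        (fun s hs => hF' s (Set.Icc_subset_Ici_self hs)) (fun s hs => le_of_lt (hsub hs))
    have hlb : ∀ x ∈ S, ε/2 ≤ x := by
      intro x hx
      by_contra hxe
      push_neg at hxe
      have : 0 ≤ F x := by
        have := hmono (Set.left_mem_Icc.mpr (by linarith)) ⟨hx.1, le_of_lt hxe⟩ hx.1
        rwa [hF0] at this
      linarith [hx.2]
    have := le_csInf hne hlb
    linarith
  -- F ≥ 0 on Ico 0 t, hence u ≤ F u there
  have hkey : ∀ u ∈ Set.Ico (0:ℝ) t, u ≤ F u := by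
    intro u hu
    have hFnn : ∀ x ∈ Set.Icc (0:ℝ) u, 0 ≤ F x := by
      intro x hx
      by_contra hc
      push_neg at hc
      have hxS : x ∈ S := ⟨hx.1, hc⟩
      have := csInf_le hbdd hxS
      have : t ≤ u := le_trans this hx.2
      linarith [hu.2]
    exact (aux2 (convex_Icc _ _) (Set.left_mem_Icc.mpr hu.1) Set.Icc_subset_Ici_self
      hk_nonpos hF' hF'' hODE hF0 hF'0 hFnn u (Set.right_mem_Icc.mpr hu.1)).2
  -- pass to the limit: t ≤ F t, contradiction
  have hclIco : t ∈ closure (Set.Ico (0:ℝ) t) := by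
    rw [closure_Ico (ne_of_lt htpos)]
    exact Set.right_mem_Icc.mpr ht0
  have hnb2 : (𝓝[Set.Ico (0:ℝ) t] t).NeBot := mem_closure_iff_nhdsWithin_neBot.mp hclIco
  have htend : Tendsto (fun u => F u - u) (𝓝[Set.Ico (0:ℝ) t] t) (𝓝 (F t - t)) :=
    ((hFc.continuousWithinAt ht0).mono_left
        (nhdsWithin_mono t (fun x hx => hx.1))).sub (tendsto_id.mono_left nhdsWithin_le_nhds)
  have : 0 ≤ F t - t := by
    refine ge_of_tendsto htend (eventually_nhdsWithin_of_forall fun x hx => ?_)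
    have := hkey x hx
    linarith
  linarith



private lemma G_deriv {F G : ℝ → ℝ} (hFc : ContinuousOn F (Set.Ici 0))
    (hG : ∀ s, G s = ∫ t in (0:ℝ)..s, F t) :
    ∀ s ∈ Set.Ici (0:ℝ), HasDerivWithinAt G (F s) (Set.Ici 0) s := by
  intro s hs
  have hint : IntervalIntegrable F volume 0 s := by
    apply ContinuousOn.intervalIntegrable
    apply hFc.mono
    rw [Set.uIcc_of_le hs]
    exact Set.Icc_subset_Ici_self
  have hI : HasDerivWithinAt (fun u => ∫ t in (0:ℝ)..u, F t) (F s) (Set.Ici 0) s := by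
    rcases eq_or_lt_of_le (Set.mem_Ici.mp hs : (0:ℝ) ≤ s) with h0 | h0
    · subst h0
      refine intervalIntegral.integral_hasDerivWithinAt_right hint
        ⟨Set.Ici 0, Filter.mem_of_superset self_mem_nhdsWithin Set.Ioi_subset_Ici_self,
          hFc.aestronglyMeasurable measurableSet_Ici⟩
        ((hFc.continuousWithinAt hs).mono Set.Ioi_subset_Ici_self)
    · have hn : Set.Ici (0:ℝ) ∈ 𝓝 s := Ici_mem_nhds h0
      have := intervalIntegral.integral_hasDerivAt_right hint
        ⟨Set.Ici 0, hn, hFc.aestronglyMeasurable measurableSet_Ici⟩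
        ((hFc.continuousWithinAt hs).continuousAt hn)
      exact this.hasDerivWithinAt
  exact hI.congr (fun u _ => hG u) (hG s)


/-- Lemma 1 (ii): if `k ≤ 0` is continuous and non-increasing and `F` solves
`F'' + kF = 0`, `F(0)=0`, `F'(0)=1`, and `G(s) = ∫₀ˢ F`, then `s ↦ G(s)/(s F(s))` is
non-increasing on `(0, ∞)`. -/
theorem stmt_2 (k F F' F'' : ℝ → ℝ)
    (hk_cont : ContinuousOn k (Set.Ici 0))
    (hk_nonpos : ∀ s ∈ Set.Ici (0 : ℝ), k s ≤ 0)
    (hk_mono : ∀ s ∈ Set.Ici (0 : ℝ), ∀ t ∈ Set.Ici (0 : ℝ), s ≤ t → k t ≤ k s)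
    (hF' : ∀ s ∈ Set.Ici (0 : ℝ), HasDerivWithinAt F (F' s) (Set.Ici 0) s)
    (hF'' : ∀ s ∈ Set.Ici (0 : ℝ), HasDerivWithinAt F' (F'' s) (Set.Ici 0) s)
    (hF''_cont : ContinuousOn F'' (Set.Ici 0))
    (hODE : ∀ s ∈ Set.Ici (0 : ℝ), F'' s + k s * F s = 0)
    (hF0 : F 0 = 0) (hF'0 : F' 0 = 1)
    (G : ℝ → ℝ) (hG : ∀ s, G s = ∫ t in (0 : ℝ)..s, F t) :
    ∀ s ∈ Set.Ioi (0 : ℝ), ∀ t ∈ Set.Ioi (0 : ℝ), s ≤ t →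
      G t / (t * F t) ≤ G s / (s * F s) := by
  have hFc : ContinuousOn F (Set.Ici 0) := fun s hs => (hF' s hs).continuousWithinAt
  have hFnn : ∀ s ∈ Set.Ici (0:ℝ), 0 ≤ F s := F_nonneg hk_nonpos hF' hF'' hODE hF0 hF'0
  have haux := aux2 (convex_Ici 0) Set.self_mem_Ici (le_refl _) hk_nonpos hF' hF'' hODE hF0 hF'0 hFnn
  have hF'1 : ∀ s ∈ Set.Ici (0:ℝ), 1 ≤ F' s := fun s hs => (haux s hs).1
  have hFid : ∀ s ∈ Set.Ici (0:ℝ), s ≤ F s := fun s hs => (haux s hs).2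
  have hGd : ∀ s ∈ Set.Ici (0:ℝ), HasDerivWithinAt G (F s) (Set.Ici 0) s := G_deriv hFc hG
  have hG0 : G 0 = 0 := by rw [hG]; simp
  have hGnn : ∀ s ∈ Set.Ici (0:ℝ), 0 ≤ G s := by
    intro s hs
    have := mono_aux (convex_Ici 0) (le_refl _) hGd hFnn Set.self_mem_Ici hs hs
    rwa [hG0] at this
  have hF''eq : ∀ s ∈ Set.Ici (0:ℝ), F'' s = -(k s * F s) := fun s hs => by
    linarith [hODE s hs]
  -- Q : s F' - F is nonneg
  have hQd : ∀ s ∈ Set.Ici (0:ℝ), HasDerivWithinAt (fun u => u * F' u - F u)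
      (1 * F' s + s * F'' s - F' s) (Set.Ici 0) s := fun s hs =>
    ((hasDerivWithinAt_id s _).mul (hF'' s hs)).sub (hF' s hs)
  have hQnn : ∀ s ∈ Set.Ici (0:ℝ), 0 ≤ s * F' s - F s := by
    intro s hs
    have hm : MonotoneOn (fun u => u * F' u - F u) (Set.Ici 0) := by
      refine mono_aux (convex_Ici 0) (le_refl _) hQd (fun u hu => ?_)
      rw [hF''eq u hu]
      nlinarith [mul_nonneg (mul_nonneg (hu : (0:ℝ) ≤ u)
        (neg_nonneg.mpr (hk_nonpos u hu))) (hFnn u hu)]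
    have := hm Set.self_mem_Ici hs hs
    simp only [zero_mul, hF0, sub_zero] at this
    linarith
  -- E : s F - 2 G is nonneg
  have hEd : ∀ s ∈ Set.Ici (0:ℝ), HasDerivWithinAt (fun u => u * F u - 2 * G u)
      (1 * F s + s * F' s - 2 * F s) (Set.Ici 0) s := fun s hs =>
    ((hasDerivWithinAt_id s _).mul (hF' s hs)).sub ((hGd s hs).const_mul 2)
  have hEnn : ∀ s ∈ Set.Ici (0:ℝ), 0 ≤ s * F s - 2 * G s := by
    intro s hs
    have hm : MonotoneOn (fun u => u * F u - 2 * G u) (Set.Ici 0) := by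
      refine mono_aux (convex_Ici 0) (le_refl _) hEd (fun u hu => ?_)
      have := hQnn u hu
      linarith
    have := hm Set.self_mem_Ici hs hs
    simp only [zero_mul, hG0, mul_zero, sub_zero] at this
    linarith
  -- L6 : s F' - F ≤ (-k s₀) s G on [0, s₀]
  have hL6 : ∀ s₀ ∈ Set.Ici (0:ℝ), ∀ s ∈ Set.Icc (0:ℝ) s₀,
      s * F' s - F s ≤ (-k s₀) * (s * G s) := by
    intro s₀ hs₀ s hs
    have hsub : Set.Icc (0:ℝ) s₀ ⊆ Set.Ici 0 := Set.Icc_subset_Ici_self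
    have hPd : ∀ u ∈ Set.Icc (0:ℝ) s₀, HasDerivWithinAt
        (fun u => (-k s₀) * (u * G u) - (u * F' u - F u))
        ((-k s₀) * (1 * G u + u * F u) - (1 * F' u + u * F'' u - F' u)) (Set.Ici 0) u :=
      fun u hu => ((((hasDerivWithinAt_id u _).mul (hGd u (hsub hu))).const_mul _).sub
        (hQd u (hsub hu)))
    have hm : MonotoneOn (fun u => (-k s₀) * (u * G u) - (u * F' u - F u)) (Set.Icc 0 s₀) := by
      refine mono_aux (convex_Icc _ _) hsub hPd (fun u hu => ?_)
      have h1 := hF''eq u (hsub hu)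
      have h2 := hk_mono u (hsub hu) s₀ hs₀ hu.2
      have h3 := hGnn u (hsub hu)
      have h4 := hFnn u (hsub hu)
      have h5 := hk_nonpos s₀ hs₀
      rw [h1]
      have hu0 : (0:ℝ) ≤ u := hu.1
      nlinarith [mul_nonneg hu0 h4, mul_nonneg (mul_nonneg hu0 h4) (sub_nonneg.mpr h2)]
    have h0m : (0:ℝ) ∈ Set.Icc (0:ℝ) s₀ := Set.left_mem_Icc.mpr hs₀
    have := hm h0m hs hs.1
    simp only [mul_zero, zero_mul, hF0, hF'0, sub_zero, hG0] at this
    linarith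
  -- L7 : 0 ≤ (-k s₀)(s₀ F G) - (s₀ F - 2G) F'
  have hL7 : ∀ s₀ ∈ Set.Ici (0:ℝ),
      0 ≤ (-k s₀) * (s₀ * F s₀ * G s₀) - (s₀ * F s₀ - 2 * G s₀) * F' s₀ := by
    intro s₀ hs₀
    have hsub : Set.Icc (0:ℝ) s₀ ⊆ Set.Ici 0 := Set.Icc_subset_Ici_self
    have hPsid : ∀ u ∈ Set.Icc (0:ℝ) s₀, HasDerivWithinAt
        (fun u => (-k s₀) * (u * F u * G u) - (u * F u - 2 * G u) * F' u)
        ((-k s₀) * ((1 * F u + u * F' u) * G u + u * F u * F u)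
          - ((1 * F u + u * F' u - 2 * F u) * F' u + (u * F u - 2 * G u) * F'' u))
        (Set.Ici 0) u := by
      intro u hu
      have h1 : HasDerivWithinAt (fun v => v * F v) (1 * F u + u * F' u) (Set.Ici 0) u :=
        (hasDerivWithinAt_id u _).mul (hF' u (hsub hu))
      exact (((h1.mul (hGd u (hsub hu))).const_mul _).sub
        ((h1.sub ((hGd u (hsub hu)).const_mul 2)).mul (hF'' u (hsub hu))))
    have hm : MonotoneOn (fun u => (-k s₀) * (u * F u * G u) - (u * F u - 2 * G u) * F' u)
        (Set.Icc 0 s₀) := by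
      refine mono_aux (convex_Icc _ _) hsub hPsid (fun u hu => ?_)
      have hu' := hsub hu
      have h1 := hF''eq u hu'
      have h2 := hk_mono u hu' s₀ hs₀ hu.2
      have h3 := hGnn u hu'
      have h4 := hFnn u hu'
      have h5 := hF'1 u hu'
      have h6 := hEnn u hu'
      have h7 := hL6 s₀ hs₀ u hu
      have h8 := hk_nonpos s₀ hs₀
      rw [h1]
      have hA : 0 ≤ ((-k s₀) * (u * G u) - (u * F' u - F u)) * F' u :=
        mul_nonneg (by linarith) (by linarith)
      have hB : 0 ≤ (k u - k s₀) * ((u * F u - 2 * G u) * F u) :=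
        mul_nonneg (by linarith) (mul_nonneg h6 h4)
      have hC : 0 ≤ (-k s₀) * (F u * G u) :=
        mul_nonneg (by linarith) (mul_nonneg h4 h3)
      nlinarith [hA, hB, hC]
    have h0m : (0:ℝ) ∈ Set.Icc (0:ℝ) s₀ := Set.left_mem_Icc.mpr hs₀
    have hrm : s₀ ∈ Set.Icc (0:ℝ) s₀ := Set.right_mem_Icc.mpr hs₀
    have := hm h0m hrm hs₀
    simp only [zero_mul, hF0, mul_zero, hG0, hF'0, sub_zero, zero_sub, mul_one] at this
    linarith
  -- H : G (F + s F') - s F² ≥ 0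
  have hHd : ∀ s ∈ Set.Ici (0:ℝ), HasDerivWithinAt
      (fun u => G u * (F u + u * F' u) - u * (F u * F u))
      (F s * (F s + s * F' s) + G s * (F' s + (1 * F' s + s * F'' s))
        - (1 * (F s * F s) + s * (F' s * F s + F s * F' s))) (Set.Ici 0) s := by
    intro s hs
    exact ((hGd s hs).mul ((hF' s hs).add ((hasDerivWithinAt_id s _).mul (hF'' s hs)))).sub
      ((hasDerivWithinAt_id s _).mul ((hF' s hs).mul (hF' s hs)))
  have hHnn : ∀ s ∈ Set.Ici (0:ℝ), 0 ≤ G s * (F s + s * F' s) - s * (F s * F s) := by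
    intro s hs
    have hm : MonotoneOn (fun u => G u * (F u + u * F' u) - u * (F u * F u)) (Set.Ici 0) := by
      refine mono_aux (convex_Ici 0) (le_refl _) hHd (fun u hu => ?_)
      have h7 := hL7 u hu
      rw [hF''eq u hu]
      nlinarith [h7]
    have := hm Set.self_mem_Ici hs hs
    simp only [hG0, hF0, zero_mul, mul_zero, sub_zero, zero_sub, zero_add] at this
    linarith
  -- final step
  have hφd : ∀ x ∈ Set.Ioi (0:ℝ), HasDerivAt (fun u => G u / (u * F u))
      ((F x * (x * F x) - G x * (1 * F x + x * F' x)) / (x * F x)^2) x := by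
    intro x hx
    have hx0 : (0:ℝ) < x := hx
    have hxI : x ∈ Set.Ici (0:ℝ) := le_of_lt hx0
    have hFpos : 0 < F x := lt_of_lt_of_le hx0 (hFid x hxI)
    have hne : x * F x ≠ 0 := ne_of_gt (mul_pos hx0 hFpos)
    have hnbhd : Set.Ici (0:ℝ) ∈ 𝓝 x := Ici_mem_nhds hx0
    have h1 : HasDerivAt G (F x) x := (hGd x hxI).hasDerivAt hnbhd
    have h2 : HasDerivAt (fun u => u * F u) (1 * F x + x * F' x) x :=
      (hasDerivAt_id x).mul ((hF' x hxI).hasDerivAt hnbhd)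
    exact h1.div h2 hne
  have hanti : AntitoneOn (fun u => G u / (u * F u)) (Set.Ioi 0) := by
    refine antitoneOn_of_hasDerivWithinAt_nonpos (convex_Ioi 0)
      (f' := fun x => (F x * (x * F x) - G x * (1 * F x + x * F' x)) / (x * F x)^2)
      (fun x hx => (hφd x hx).continuousAt.continuousWithinAt)
      (fun x hx => ?_) (fun x hx => ?_)
    · rw [interior_Ioi] at hx ⊢
      exact (hφd x hx).hasDerivWithinAt
    · rw [interior_Ioi] at hx
      have hx0 : (0:ℝ) < x := hx
      have hxI : x ∈ Set.Ici (0:ℝ) := le_of_lt hx0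
      have hFpos : 0 < F x := lt_of_lt_of_le hx0 (hFid x hxI)
      apply div_nonpos_of_nonpos_of_nonneg
      · nlinarith [hHnn x hxI]
      · positivity
  intro s hs t ht hst
  exact hanti hs ht hst
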